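/- Let λ > 0, M > 0, δ = λM > 1, p < 0 with λe^{pM} = λ + p, and g as in the infinite-buffer limiting density (g(x) = (1/M)(1 − e^{px}) on (0,M], g(x) = (−p/(M(λ+p))) e^{px} on (M,∞)). Then ∫_M^∞ g(x) dx = 1/δ. -/

import Mathlib

open Real MeasureTheory

lemma exp_int (p M : ℝ) (hp : p < 0) :
    (∫ x in Set.Ioi M, Real.exp (p * x)) = -Real.exp (p * M) / p := by
  have := integral_Ioi_of_hasDerivAt_of_tendsto' (f := fun x => Real.exp (p * x) / p)
    (f' := fun x => Real.exp (p * x)) (a := M) (m := 0) ?_ ?_ ?_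
  · rw [this]; ring
  · intro x hx
    have h : HasDerivAt (fun x => Real.exp (p * x)) (Real.exp (p * x) * p) x := by
      simpa using ((hasDerivAt_id x).const_mul p).exp
    simpa [mul_div_assoc, mul_div_cancel_right₀ _ (ne_of_lt hp)] using h.div_const p
  · simpa [neg_mul, mul_comm] using exp_neg_integrableOn_Ioi M (neg_pos.mpr hp)
  · have : Filter.Tendsto (fun x : ℝ => Real.exp (p * x)) Filter.atTop (nhds 0) := by
      simpa [neg_mul] using Real.tendsto_exp_comp_nhds_zero.mpr
        (Filter.Tendsto.const_mul_atTop_of_neg hp Filter.tendsto_id)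
    simpa using this.div_const p

theorem stmt3 (lam M p : ℝ) (hlam : 0 < lam) (hM : 0 < M) (hδ : 1 < lam * M)
    (hp : p < 0) (heq : lam * Real.exp (p * M) = lam + p) :
    (∫ x in Set.Ioi M, (-p / (M * (lam + p))) * Real.exp (p * x)) = 1 / (lam * M) := by
  have hlp : 0 < lam + p := by
    have := Real.exp_pos (p * M)
    nlinarith
  rw [integral_const_mul, exp_int p M hp]
  field_simp
  rw [div_eq_iff (ne_of_lt hp)]
  have : p * (lam * Real.exp (p * M)) * M = p * (lam + p) * M := by rw [heq]
  linear_combination p * heq
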